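/- (Theorem 3.1, tightness of partitioning) Let C be a monotone, zero-based, hierarchically consistent cost family on d dimensions, let Δ be a last-level gap bound for the family, and let Q < C_0(N 0). Then x̄ = FindPartition(Q) satisfies C(x̄) ≤ Q and Q − C(x̄) < Δ. -/

import Mathlib

noncomputable section

open scoped Classical
open Finset

namespace Nacho

/-- A prefix `p` is valid up to length `m` if its entries below `m` are within the extents. -/
def ValidPrefix {d : ℕ} (N : Fin d → ℕ) (m : ℕ) (p : Fin d → ℕ) : Prop :=
  ∀ k : Fin d, (k : ℕ) < m → p k < N k

/-- A family of cost functions only depends on the prefix below its level. -/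
def PrefixDep {d : ℕ} (C : Fin d → (Fin d → ℕ) → ℕ → ℕ) : Prop :=
  ∀ (m : Fin d) (p p' : Fin d → ℕ) (x : ℕ),
    (∀ k : Fin d, (k : ℕ) < (m : ℕ) → p k = p' k) → C m p x = C m p' x

/-- Monotone cost family. -/
def IsMonotoneFam {d : ℕ} (N : Fin d → ℕ) (C : Fin d → (Fin d → ℕ) → ℕ → ℕ) : Prop :=
  ∀ (m : Fin d) (p : Fin d → ℕ), ValidPrefix N (m : ℕ) p →
    ∀ x : ℕ, x < N m → C m p x ≤ C m p (x + 1)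

/-- Zero-based cost family. -/
def IsZeroBased {d : ℕ} (N : Fin d → ℕ) (C : Fin d → (Fin d → ℕ) → ℕ → ℕ) : Prop :=
  ∀ (m : Fin d) (p : Fin d → ℕ), ValidPrefix N (m : ℕ) p → C m p 0 = 0

/-- Hierarchically consistent cost family. -/
def IsHierConsistent {d : ℕ} (N : Fin d → ℕ) (C : Fin d → (Fin d → ℕ) → ℕ → ℕ) : Prop :=
  ∀ (m : Fin d) (h : (m : ℕ) + 1 < d) (p : Fin d → ℕ), ValidPrefix N (m : ℕ) p →
    ∀ x : ℕ, x < N m →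
      C m p (x + 1)
        = C m p x + C ⟨(m : ℕ) + 1, h⟩ (Function.update p m x) (N ⟨(m : ℕ) + 1, h⟩)

/-- One step of the hierarchical search: at level `m`, pick the greatest in-range coordinate
whose cost does not exceed the residual, record it, and subtract its cost. -/
def partStep {d : ℕ} (N : Fin d → ℕ) (C : Fin d → (Fin d → ℕ) → ℕ → ℕ) (m : ℕ)
    (st : (Fin d → ℕ) × ℕ) : (Fin d → ℕ) × ℕ :=
  if h : m < d then
    let x := Nat.findGreatest (fun y => C ⟨m, h⟩ st.1 y ≤ st.2) (N ⟨m, h⟩ - 1)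
    (Function.update st.1 ⟨m, h⟩ x, st.2 - C ⟨m, h⟩ st.1 x)
  else st

/-- Partially-built coordinate and residual after the first `m` levels of `FindPartition`. -/
def partState {d : ℕ} (N : Fin d → ℕ) (C : Fin d → (Fin d → ℕ) → ℕ → ℕ) (Q : ℕ) :
    ℕ → (Fin d → ℕ) × ℕ
  | 0 => (fun _ => 0, Q)
  | m + 1 => partStep N C m (partState N C Q m)

/-- `FindPartition` of the hierarchical search partitioning algorithm. -/
def findPartition {d : ℕ} (N : Fin d → ℕ) (C : Fin d → (Fin d → ℕ) → ℕ → ℕ) (Q : ℕ) :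
    Fin d → ℕ :=
  (partState N C Q d).1

/-- Residual cost `R_m` of `FindPartition`. -/
def residual {d : ℕ} (N : Fin d → ℕ) (C : Fin d → (Fin d → ℕ) → ℕ → ℕ) (Q : ℕ) (m : ℕ) : ℕ :=
  (partState N C Q m).2

/-- Total cost of a coordinate tuple. -/
def totalCost {d : ℕ} (C : Fin d → (Fin d → ℕ) → ℕ → ℕ) (y : Fin d → ℕ) : ℕ :=
  ∑ m : Fin d, C m y (y m)

/-- Strict lexicographic order on coordinate tuples. -/
def LexLt {d : ℕ} (x y : Fin d → ℕ) : Prop :=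
  ∃ m : Fin d, (∀ k : Fin d, (k : ℕ) < (m : ℕ) → x k = y k) ∧ x m < y m

/-- Reflexive lexicographic order on coordinate tuples. -/
def LexLe {d : ℕ} (x y : Fin d → ℕ) : Prop :=
  LexLt x y ∨ x = y

/-- `Δ` bounds the cost gap between adjacent coordinates at the last level. -/
def LastLevelGapBound {d : ℕ} (N : Fin d → ℕ) (C : Fin d → (Fin d → ℕ) → ℕ → ℕ) (Δ : ℕ) :
    Prop :=
  ∀ (hd : 0 < d) (p : Fin d → ℕ), ValidPrefix N (d - 1) p →
    ∀ x : ℕ, x < N ⟨d - 1, Nat.sub_lt hd Nat.one_pos⟩ →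
      C ⟨d - 1, Nat.sub_lt hd Nat.one_pos⟩ p (x + 1)
        - C ⟨d - 1, Nat.sub_lt hd Nat.one_pos⟩ p x ≤ Δ

/-- The count cost family of a finite set of nonzero coordinates. -/
def countCost {d : ℕ} (N : Fin d → ℕ) (S : Finset ((m : Fin d) → Fin (N m))) :
    Fin d → (Fin d → ℕ) → ℕ → ℕ :=
  fun m p x =>
    (S.filter fun c =>
      (∀ k : Fin d, (k : ℕ) < (m : ℕ) → (c k : ℕ) = p k) ∧ (c m : ℕ) < x).card

/-- The summed count family of finitely many finite sets of nonzero coordinates. -/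
def summedCost {d : ℕ} (N : Fin d → ℕ) {t : ℕ}
    (S : Fin t → Finset ((m : Fin d) → Fin (N m))) :
    Fin d → (Fin d → ℕ) → ℕ → ℕ :=
  fun m p x => ∑ i, countCost N (S i) m p x

/-- Theorem 3.1, tightness of partitioning: `FindPartition Q` returns a
coordinate whose total cost is at most `Q`, within `Δ` of it. -/
theorem stmt4 {d : ℕ} (hd : 0 < d) {N : Fin d → ℕ} (hN : ∀ m, 1 ≤ N m)
    (C : Fin d → (Fin d → ℕ) → ℕ → ℕ) (hPD : PrefixDep C)
    (hMono : IsMonotoneFam N C) (hZero : IsZeroBased N C) (hHC : IsHierConsistent N C)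
    (Δ : ℕ) (hΔ : LastLevelGapBound N C Δ)
    (Q : ℕ) (hQ : Q < C ⟨0, hd⟩ (fun _ => 0) (N ⟨0, hd⟩)) :
    totalCost C (findPartition N C Q) ≤ Q ∧
      Q - totalCost C (findPartition N C Q) < Δ := by
  classical
  set st : ℕ → (Fin d → ℕ) × ℕ := partState N C Q with hst
  have hstep : ∀ m (hm : m < d),
      st (m + 1) =
        (Function.update (st m).1 ⟨m, hm⟩
            (Nat.findGreatest (fun y => C ⟨m, hm⟩ (st m).1 y ≤ (st m).2) (N ⟨m, hm⟩ - 1)),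
          (st m).2 -
            C ⟨m, hm⟩ (st m).1
              (Nat.findGreatest (fun y => C ⟨m, hm⟩ (st m).1 y ≤ (st m).2) (N ⟨m, hm⟩ - 1))) := by
    intro m hm
    show partStep N C m (st m) = _
    rw [partStep, dif_pos hm]
  have hstep' : ∀ m, d ≤ m → st (m + 1) = st m := by
    intro m hm
    show partStep N C m (st m) = _
    rw [partStep, dif_neg (by omega)]
  have inv : ∀ m, m ≤ d → ValidPrefix N m (st m).1 ∧
      ∀ hm : m < d, (st m).2 < C ⟨m, hm⟩ (st m).1 (N ⟨m, hm⟩) := by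
    intro m
    induction m with
    | zero =>
      intro _
      exact ⟨fun k hk => absurd hk (Nat.not_lt_zero _), fun hm => hQ⟩
    | succ m ih =>
      intro hm1
      have hm : m < d := hm1
      obtain ⟨hval, hinv⟩ := ih (le_of_lt hm)
      set x := Nat.findGreatest (fun y => C ⟨m, hm⟩ (st m).1 y ≤ (st m).2) (N ⟨m, hm⟩ - 1)
        with hxdef
      have hNm := hN ⟨m, hm⟩
      have hxle : x ≤ N ⟨m, hm⟩ - 1 := Nat.findGreatest_le _
      have hxlt : x < N ⟨m, hm⟩ := by omega
      have hCx : C ⟨m, hm⟩ (st m).1 x ≤ (st m).2 :=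
        Nat.findGreatest_spec (P := fun y => C ⟨m, hm⟩ (st m).1 y ≤ (st m).2) (Nat.zero_le _)
          (by simp [hZero ⟨m, hm⟩ _ hval])
      have hnext : (st m).2 < C ⟨m, hm⟩ (st m).1 (x + 1) := by
        rcases eq_or_lt_of_le hxle with he | hl
        · have hx1 : x + 1 = N ⟨m, hm⟩ := by omega
          rw [hx1]; exact hinv hm
        · have := Nat.findGreatest_is_greatest
            (P := fun y => C ⟨m, hm⟩ (st m).1 y ≤ (st m).2)
            (lt_add_one x) (by omega)
          omega
      constructor
      · intro k hk
        rw [hstep m hm]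
        simp only
        by_cases hkm : k = ⟨m, hm⟩
        · subst hkm; rw [Function.update_self]; exact hxlt
        · rw [Function.update_of_ne hkm]
          exact hval k (by
            have : (k : ℕ) ≠ m := fun h => hkm (Fin.ext h)
            omega)
      · intro hm'
        rw [hstep m hm]
        simp only
        rw [← hxdef]
        have hhc := hHC ⟨m, hm⟩ hm' (st m).1 hval x hxlt
        simp only [Fin.val_mk] at hhc ⊢
        omega
  have key : ∀ m (hm : m < d),
      C ⟨m, hm⟩ (st m).1
          (Nat.findGreatest (fun y => C ⟨m, hm⟩ (st m).1 y ≤ (st m).2) (N ⟨m, hm⟩ - 1))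
        ≤ (st m).2 ∧
      (st m).2 < C ⟨m, hm⟩ (st m).1
          (Nat.findGreatest (fun y => C ⟨m, hm⟩ (st m).1 y ≤ (st m).2) (N ⟨m, hm⟩ - 1) + 1) ∧
      Nat.findGreatest (fun y => C ⟨m, hm⟩ (st m).1 y ≤ (st m).2) (N ⟨m, hm⟩ - 1)
        < N ⟨m, hm⟩ := by
    intro m hm
    obtain ⟨hval, hinv⟩ := inv m (le_of_lt hm)
    set x := Nat.findGreatest (fun y => C ⟨m, hm⟩ (st m).1 y ≤ (st m).2) (N ⟨m, hm⟩ - 1)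
      with hxdef
    have hNm := hN ⟨m, hm⟩
    have hxle : x ≤ N ⟨m, hm⟩ - 1 := Nat.findGreatest_le _
    have hxlt : x < N ⟨m, hm⟩ := by omega
    have hCx : C ⟨m, hm⟩ (st m).1 x ≤ (st m).2 :=
      Nat.findGreatest_spec (P := fun y => C ⟨m, hm⟩ (st m).1 y ≤ (st m).2) (Nat.zero_le _)
        (by simp [hZero ⟨m, hm⟩ _ hval])
    have hnext : (st m).2 < C ⟨m, hm⟩ (st m).1 (x + 1) := by
      rcases eq_or_lt_of_le hxle with he | hl
      · have hx1 : x + 1 = N ⟨m, hm⟩ := by omega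
        rw [hx1]; exact hinv hm
      · have := Nat.findGreatest_is_greatest
          (P := fun y => C ⟨m, hm⟩ (st m).1 y ≤ (st m).2)
          (lt_add_one x) (by omega)
        omega
    exact ⟨hCx, hnext, hxlt⟩
  have hstab : ∀ m' m, m ≤ m' → ∀ k : Fin d, (k : ℕ) < m → (st m').1 k = (st m).1 k := by
    intro m'
    induction m' with
    | zero =>
      intro m hm k hk
      have : m = 0 := Nat.le_zero.mp hm
      subst this; rfl
    | succ m' ih =>
      intro m hm k hk
      rcases Nat.eq_or_lt_of_le hm with he | hl
      · rw [he]
      · have hm'' : m ≤ m' := by omega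
        by_cases hdm : m' < d
        · rw [hstep m' hdm]
          simp only
          rw [Function.update_of_ne (by
            intro h
            have : (k : ℕ) = m' := by rw [h]
            omega)]
          exact ih m hm'' k hk
        · rw [hstep' m' (by omega)]
          exact ih m hm'' k hk
  have hsum : ∀ m, m ≤ d →
      (∑ k ∈ univ.filter (fun k : Fin d => (k : ℕ) < m),
        C k (st d).1 ((st d).1 k)) + (st m).2 = Q := by
    intro m
    induction m with
    | zero =>
      intro _
      simp [hst, partState]
    | succ m ih =>
      intro hm1
      have hm : m < d := hm1
      have hins : (univ.filter fun k : Fin d => (k : ℕ) < m + 1)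
          = insert ⟨m, hm⟩ (univ.filter fun k : Fin d => (k : ℕ) < m) := by
        ext k
        simp only [mem_filter, mem_univ, true_and, mem_insert, Fin.ext_iff, Fin.val_mk]
        omega
      rw [hins, Finset.sum_insert (by simp)]
      set x := Nat.findGreatest (fun y => C ⟨m, hm⟩ (st m).1 y ≤ (st m).2) (N ⟨m, hm⟩ - 1)
        with hxdef
      have hxval : (st d).1 ⟨m, hm⟩ = x := by
        have h1 := hstab d (m + 1) (by omega) ⟨m, hm⟩ (by simp)
        rw [h1, hstep m hm]
        simp [hxdef]
      have hterm : C ⟨m, hm⟩ (st d).1 ((st d).1 ⟨m, hm⟩) = C ⟨m, hm⟩ (st m).1 x := by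
        rw [hxval]
        exact hPD ⟨m, hm⟩ _ _ x (fun k hk => hstab d m (le_of_lt hm) k hk)
      rw [hterm]
      have hR : (st (m + 1)).2 = (st m).2 - C ⟨m, hm⟩ (st m).1 x := by
        rw [hstep m hm]
      have hCx := (key m hm).1
      have hold := ih (le_of_lt hm)
      rw [← hxdef] at hCx
      omega
  have hfp : findPartition N C Q = (st d).1 := rfl
  have hcost : totalCost C (findPartition N C Q) + (st d).2 = Q := by
    have h1 := hsum d le_rfl
    have hfil : (univ.filter fun k : Fin d => (k : ℕ) < d) = univ := by
      ext k; simp [k.isLt]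
    rw [hfil] at h1
    rw [hfp]
    exact h1
  have hm : d - 1 < d := Nat.sub_lt hd Nat.one_pos
  have hfinal : (st d).2 < Δ := by
    obtain ⟨hCx, hnext, hxlt⟩ := key (d - 1) hm
    have hval := (inv (d - 1) (le_of_lt hm)).1
    have hgap : C ⟨d - 1, hm⟩ (st (d - 1)).1
          (Nat.findGreatest (fun y => C ⟨d - 1, hm⟩ (st (d - 1)).1 y ≤ (st (d - 1)).2)
            (N ⟨d - 1, hm⟩ - 1) + 1)
        - C ⟨d - 1, hm⟩ (st (d - 1)).1
          (Nat.findGreatest (fun y => C ⟨d - 1, hm⟩ (st (d - 1)).1 y ≤ (st (d - 1)).2)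
            (N ⟨d - 1, hm⟩ - 1)) ≤ Δ :=
      hΔ hd (st (d - 1)).1 hval
        (Nat.findGreatest (fun y => C ⟨d - 1, hm⟩ (st (d - 1)).1 y ≤ (st (d - 1)).2)
          (N ⟨d - 1, hm⟩ - 1)) hxlt
    have h1 : d - 1 + 1 = d := by omega
    have hR : (st (d - 1 + 1)).2 = (st (d - 1)).2 - C ⟨d - 1, hm⟩ (st (d - 1)).1
        (Nat.findGreatest (fun y => C ⟨d - 1, hm⟩ (st (d - 1)).1 y ≤ (st (d - 1)).2)
          (N ⟨d - 1, hm⟩ - 1)) := by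
      rw [hstep (d - 1) hm]
    rw [h1] at hR
    omega
  omega

end Nacho
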